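/- Let M = M(S_0,...,S_r) be a freedom matroid on S, let e ∈ S, and set T_i = S_i \ {e} for all i. Then: (1) a set I ⊆ S \ {e} is independent in the deletion M\e if and only if |I ∩ T_i| ≤ i for all 0 ≤ i ≤ r; (2) if e is a loop of M then M/e = M\e; and (3) if e is not a loop and k = min{ i : e ∈ S_i }, then a set I ⊆ S \ {e} is independent in the contraction M/e if and only if |I ∩ T_i| ≤ i for 0 ≤ i ≤ k-2 and |I ∩ T_i| ≤ i-1 for k ≤ i ≤ r. -/

import Mathlib

open Matroid Set

/-- Let `M = M(S₀,…,S_r)` be a freedom matroid on `S`, let `e ∈ S`, and set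
`Tᵢ = Sᵢ \ {e}`.  Then:
(1) a set `I ⊆ S \ {e}` is independent in the deletion `M \ e` (the restriction of `M` to
    `S \ {e}`) iff `|I ∩ Tᵢ| ≤ i` for all `0 ≤ i ≤ r`;
(2) if `e` is a loop of `M` then `M/e = M\e`;
(3) if `e` is not a loop and `k = min { i : e ∈ Sᵢ }`, then `I ⊆ S \ {e}` is independent in
    the contraction `M/e` iff `|I ∩ Tᵢ| ≤ i` for `0 ≤ i ≤ k-2` and `|I ∩ Tᵢ| ≤ i-1` for
    `k ≤ i ≤ r`.
Here the contraction `M/e` is any matroid `N` with ground set `S \ {e}` in which a set `I`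
is independent iff `I ⊆ S \ {e}` and `I ∪ J` is independent in `M` for some basis `J`
of `{e}` in `M`. -/
theorem freedom_matroid_delete_contract {α : Type*} (S : Set α) (hS : S.Finite) (r : ℕ)
    (F : ℕ → Set α) (hFr : F r = S) (hchain : ∀ i < r, F i ⊂ F (i + 1))
    (M : Matroid α) (hE : M.E = S)
    (hInd : ∀ I : Set α, M.Indep I ↔ I ⊆ S ∧ ∀ i ≤ r, (I ∩ F i).ncard ≤ i)
    (e : α) (he : e ∈ S)
    (N : Matroid α) (hNE : N.E = S \ {e})
    (hNInd : ∀ I : Set α, N.Indep I ↔ I ⊆ S \ {e} ∧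
      ∃ J ⊆ ({e} : Set α), M.IsBasis J {e} ∧ M.Indep (I ∪ J)) :
    (∀ I : Set α, (M ↾ (S \ {e})).Indep I ↔
        I ⊆ S \ {e} ∧ ∀ i ≤ r, (I ∩ (F i \ {e})).ncard ≤ i) ∧
    (¬ M.Indep {e} → N = M ↾ (S \ {e})) ∧
    (∀ k : ℕ, M.Indep {e} → e ∈ F k → (∀ i < k, e ∉ F i) →
      ∀ I : Set α, N.Indep I ↔ I ⊆ S \ {e} ∧
        (∀ i : ℕ, i + 2 ≤ k → (I ∩ (F i \ {e})).ncard ≤ i) ∧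
        (∀ i : ℕ, k ≤ i → i ≤ r → (I ∩ (F i \ {e})).ncard ≤ i - 1)) := by
  classical
  -- monotonicity of the chain up to r
  have hmono : ∀ j ≤ r, ∀ i ≤ j, F i ⊆ F j := by
    intro j hj
    induction j with
    | zero =>
      intro i hi
      interval_cases i
      exact Subset.rfl
    | succ n ih =>
      intro i hi
      rcases Nat.lt_or_ge i (n + 1) with h | h
      · exact (ih (by omega) i (by omega)).trans (hchain n (by omega)).subset
      · have : i = n + 1 := by omega
        subst this; exact Subset.rfl
  have hinter : ∀ I : Set α, e ∉ I → ∀ i : ℕ, I ∩ (F i \ {e}) = I ∩ F i := by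
    intro I heI i
    ext x
    simp only [mem_inter_iff, mem_diff, mem_singleton_iff]
    constructor
    · rintro ⟨h1, h2, _⟩; exact ⟨h1, h2⟩
    · rintro ⟨h1, h2⟩; exact ⟨h1, h2, fun h => heI (h ▸ h1)⟩
  have part1 : ∀ I : Set α, (M ↾ (S \ {e})).Indep I ↔
      I ⊆ S \ {e} ∧ ∀ i ≤ r, (I ∩ (F i \ {e})).ncard ≤ i := by
    intro I
    rw [Matroid.restrict_indep_iff, hInd]
    constructor
    · rintro ⟨⟨hIS, hc⟩, hIe⟩
      have heI : e ∉ I := fun h => (hIe h).2 rfl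
      exact ⟨hIe, fun i hi => by rw [hinter I heI i]; exact hc i hi⟩
    · rintro ⟨hIe, hc⟩
      have heI : e ∉ I := fun h => (hIe h).2 rfl
      refine ⟨⟨fun x hx => (hIe hx).1, fun i hi => ?_⟩, hIe⟩
      rw [← hinter I heI i]; exact hc i hi
  have heE : ({e} : Set α) ⊆ M.E := by rw [hE]; simpa using he
  refine ⟨part1, ?_, ?_⟩
  · intro hne
    refine Matroid.ext_indep (by rw [hNE, Matroid.restrict_ground_eq]) ?_
    intro I hIE
    rw [hNInd, Matroid.restrict_indep_iff]
    constructor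
    · rintro ⟨hIe, J, hJ, hbJ, hind⟩
      rcases subset_singleton_iff_eq.mp hJ with rfl | rfl
      · rw [union_empty] at hind
        exact ⟨hind, hIe⟩
      · exact absurd hbJ.indep hne
    · rintro ⟨hind, hIe⟩
      obtain ⟨J, hJ⟩ := M.exists_isBasis {e} heE
      have hJ0 : J = ∅ := by
        rcases subset_singleton_iff_eq.mp hJ.subset with h | h
        · exact h
        · exact absurd (h ▸ hJ.indep) hne
      exact ⟨hIe, J, hJ.subset, hJ, by rw [hJ0, union_empty]; exact hind⟩
  · intro k hek heFk hlt I
    have hbe : M.IsBasis {e} {e} := hek.isBasis_self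
    have hk1 : 1 ≤ k := by
      by_contra h
      push_neg at h
      interval_cases k
      have h2 := ((hInd {e}).mp hek).2 0 (Nat.zero_le r)
      have : ({e} : Set α) ∩ F 0 = {e} := by
        rw [inter_eq_left]; simpa using heFk
      rw [this] at h2
      simp at h2
    have hkr : k ≤ r := by
      by_contra h; push_neg at h
      exact hlt r h (hFr ▸ he)
    have hcomp : ∀ (I : Set α), e ∉ I → I ⊆ S → ∀ i : ℕ,
        ((I ∪ {e}) ∩ F i).ncard =
          (I ∩ (F i \ {e})).ncard + (if e ∈ F i then 1 else 0) := by
      intro I heI hIS i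
      rw [hinter I heI i]
      by_cases hef : e ∈ F i
      · simp only [hef, if_true]
        have h1 : (I ∪ {e}) ∩ F i = (I ∩ F i) ∪ {e} := by
          rw [union_inter_distrib_right]
          congr 1
          rw [inter_eq_left]; simpa using hef
        rw [h1, Set.ncard_union_eq (disjoint_singleton_right.mpr fun h => heI h.1)
          ((hS.subset hIS).inter_of_left _) (finite_singleton e)]
        simp
      · simp only [hef, if_false, add_zero]
        congr 1
        ext x
        simp only [mem_inter_iff, mem_union, mem_singleton_iff]
        constructor
        · rintro ⟨h1 | rfl, h2⟩
          · exact ⟨h1, h2⟩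
          · exact absurd h2 hef
        · rintro ⟨h1, h2⟩; exact ⟨Or.inl h1, h2⟩
    rw [hNInd]
    constructor
    · rintro ⟨hIe, J, hJ, hbJ, hind⟩
      have hJe : J = {e} := hbJ.eq_of_subset_indep hek hJ Subset.rfl
      rw [hJe] at hind
      have heI : e ∉ I := fun h => (hIe h).2 rfl
      have hIS : I ⊆ S := fun x hx => (hIe hx).1
      obtain ⟨-, hc⟩ := (hInd _).mp hind
      refine ⟨hIe, fun i hi2 => ?_, fun i hki hir => ?_⟩
      · have h1 := hc i (by omega)
        rw [hcomp I heI hIS i] at h1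
        have hni : e ∉ F i := hlt i (by omega)
        simp only [hni, if_false, add_zero] at h1
        exact h1
      · have h1 := hc i hir
        rw [hcomp I heI hIS i] at h1
        have hei : e ∈ F i := hmono i hir k hki heFk
        simp only [hei, if_true] at h1
        omega
    · rintro ⟨hIe, hc1, hc2⟩
      refine ⟨hIe, {e}, Subset.rfl, hbe, ?_⟩
      rw [hInd]
      have heI : e ∉ I := fun h => (hIe h).2 rfl
      have hIS : I ⊆ S := fun x hx => (hIe hx).1
      refine ⟨union_subset hIS (singleton_subset_iff.mpr he), fun i hi => ?_⟩
      rw [hcomp I heI hIS i]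
      rcases Nat.lt_or_ge i k with h | h
      · have hni : e ∉ F i := hlt i h
        simp only [hni, if_false, add_zero]
        rcases Nat.lt_or_ge (i + 1) k with h2 | h2
        · exact hc1 i (by omega)
        · have hsub : I ∩ (F i \ {e}) ⊆ I ∩ (F k \ {e}) := by
            apply inter_subset_inter_right
            exact diff_subset_diff_left (hmono k hkr i (by omega))
          have hle := Set.ncard_le_ncard hsub
            ((hS.subset hIS).inter_of_left _)
          have := hc2 k le_rfl hkr
          omega
      · have hei : e ∈ F i := hmono i hi k h heFk
        simp only [hei, if_true]
        have := hc2 i h hi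
        omega
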